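/- For the second-order system with self-propulsion and pairwise interaction, ẋ_i = v_i, v̇_i = (a - b‖v_i‖₂²)v_i - (1/N)Σ_{j≠i} u(‖x_i-x_j‖₂)(x_i - x_j), where u is bounded Lipschitz and a, b > 0, if max_i ‖v_i‖₂ ≤ β_v and max_i ‖x_i‖₂ ≤ β_x, then for all i, j: ‖ẋ_i - ẋ_j‖₂ + ‖v̇_i - v̇_j‖₂ ≤ (1 + a + 3b·β_v²)·‖v_i - v_j‖₂ + (‖u‖_∞ + 2β_x·‖u‖_Lip)·‖x_i - x_j‖₂. -/

import Mathlib

noncomputable section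

lemma aux_prop {E : Type*} [NormedAddCommGroup E] [NormedSpace ℝ E]
    (a b βv : ℝ) (ha : 0 ≤ a) (hb : 0 ≤ b) (vi vj : E)
    (hi : ‖vi‖ ≤ βv) (hj : ‖vj‖ ≤ βv) :
    ‖(a - b * ‖vi‖ ^ 2) • vi - (a - b * ‖vj‖ ^ 2) • vj‖ ≤
      (a + 3 * b * βv ^ 2) * ‖vi - vj‖ := by
  have hβv : 0 ≤ βv := le_trans (norm_nonneg vi) hi
  have hdec : (a - b * ‖vi‖ ^ 2) • vi - (a - b * ‖vj‖ ^ 2) • vj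
      = a • (vi - vj) - b • ((‖vi‖ ^ 2) • (vi - vj) + (‖vi‖ ^ 2 - ‖vj‖ ^ 2) • vj) := by
    module
  have hsq : |‖vi‖ ^ 2 - ‖vj‖ ^ 2| ≤ 2 * βv * ‖vi - vj‖ := by
    have h1 : ‖vi‖ ^ 2 - ‖vj‖ ^ 2 = (‖vi‖ + ‖vj‖) * (‖vi‖ - ‖vj‖) := by ring
    rw [h1, abs_mul]
    have h2 : |‖vi‖ - ‖vj‖| ≤ ‖vi - vj‖ := abs_norm_sub_norm_le vi vj
    have h3 : |‖vi‖ + ‖vj‖| ≤ 2 * βv := by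
      rw [abs_of_nonneg (by positivity)]; linarith
    exact mul_le_mul h3 h2 (abs_nonneg _) (by positivity)
  have hX : ‖(‖vi‖ ^ 2) • (vi - vj) + (‖vi‖ ^ 2 - ‖vj‖ ^ 2) • vj‖
      ≤ 3 * βv ^ 2 * ‖vi - vj‖ := by
    have h1 : ‖(‖vi‖ ^ 2) • (vi - vj)‖ = ‖vi‖ ^ 2 * ‖vi - vj‖ := by
      rw [norm_smul, Real.norm_eq_abs, abs_of_nonneg (by positivity)]
    have h2 : ‖(‖vi‖ ^ 2 - ‖vj‖ ^ 2) • vj‖ = |‖vi‖ ^ 2 - ‖vj‖ ^ 2| * ‖vj‖ := by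
      rw [norm_smul, Real.norm_eq_abs]
    have h3 := norm_add_le ((‖vi‖ ^ 2) • (vi - vj)) ((‖vi‖ ^ 2 - ‖vj‖ ^ 2) • vj)
    rw [h1, h2] at h3
    have h4 : ‖vi‖ ^ 2 ≤ βv ^ 2 := by nlinarith [norm_nonneg vi]
    have h5 : |‖vi‖ ^ 2 - ‖vj‖ ^ 2| * ‖vj‖ ≤ (2 * βv * ‖vi - vj‖) * βv :=
      mul_le_mul hsq hj (norm_nonneg vj) (by positivity)
    nlinarith [norm_nonneg (vi - vj)]
  rw [hdec]
  have := norm_sub_le (a • (vi - vj))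
      (b • ((‖vi‖ ^ 2) • (vi - vj) + (‖vi‖ ^ 2 - ‖vj‖ ^ 2) • vj))
  rw [norm_smul a, norm_smul b, Real.norm_eq_abs, Real.norm_eq_abs,
    abs_of_nonneg ha, abs_of_nonneg hb] at this
  have hb' : b * ‖(‖vi‖ ^ 2) • (vi - vj) + (‖vi‖ ^ 2 - ‖vj‖ ^ 2) • vj‖
      ≤ b * (3 * βv ^ 2 * ‖vi - vj‖) := by
    exact mul_le_mul_of_nonneg_left hX hb
  nlinarith [norm_nonneg (vi - vj)]

lemma aux_int {E : Type*} [NormedAddCommGroup E] [NormedSpace ℝ E]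
    (u : ℝ → ℝ) (uLip uInf βx : ℝ)
    (huLip : ∀ s t, |u s - u t| ≤ uLip * |s - t|)
    (huInf : ∀ s, |u s| ≤ uInf)
    (hLip0 : 0 ≤ uLip)
    (xi xj xk : E) (hj : ‖xj‖ ≤ βx) (hk : ‖xk‖ ≤ βx) :
    ‖u ‖xi - xk‖ • (xi - xk) - u ‖xj - xk‖ • (xj - xk)‖ ≤
      (uInf + 2 * βx * uLip) * ‖xi - xj‖ := by
  have hβx : 0 ≤ βx := le_trans (norm_nonneg xj) hj
  set c := u ‖xi - xk‖ with hc
  set d := u ‖xj - xk‖ with hd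
  have hdec : c • (xi - xk) - d • (xj - xk) = c • (xi - xj) + (c - d) • (xj - xk) := by
    module
  rw [hdec]
  have h1 : ‖c • (xi - xj)‖ ≤ uInf * ‖xi - xj‖ := by
    rw [norm_smul, Real.norm_eq_abs]
    exact mul_le_mul_of_nonneg_right (huInf _) (norm_nonneg _)
  have hcd : |c - d| ≤ uLip * ‖xi - xj‖ := by
    have h2 := huLip ‖xi - xk‖ ‖xj - xk‖
    have h3 : |‖xi - xk‖ - ‖xj - xk‖| ≤ ‖xi - xj‖ := by
      have := abs_norm_sub_norm_le (xi - xk) (xj - xk)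
      have he : xi - xk - (xj - xk) = xi - xj := by abel
      rwa [he] at this
    calc |c - d| ≤ uLip * |‖xi - xk‖ - ‖xj - xk‖| := h2
      _ ≤ uLip * ‖xi - xj‖ := mul_le_mul_of_nonneg_left h3 hLip0
  have h4 : ‖(c - d) • (xj - xk)‖ ≤ (uLip * ‖xi - xj‖) * (2 * βx) := by
    rw [norm_smul, Real.norm_eq_abs]
    have hjk : ‖xj - xk‖ ≤ 2 * βx := by
      calc ‖xj - xk‖ ≤ ‖xj‖ + ‖xk‖ := norm_sub_le _ _
        _ ≤ 2 * βx := by linarith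
    exact mul_le_mul hcd hjk (norm_nonneg _) (by positivity)
  calc ‖c • (xi - xj) + (c - d) • (xj - xk)‖
      ≤ ‖c • (xi - xj)‖ + ‖(c - d) • (xj - xk)‖ := norm_add_le _ _
    _ ≤ uInf * ‖xi - xj‖ + (uLip * ‖xi - xj‖) * (2 * βx) := add_le_add h1 h4
    _ = (uInf + 2 * βx * uLip) * ‖xi - xj‖ := by ring

theorem stmt_16 {N d : ℕ}
    (x v : Fin N → EuclideanSpace ℝ (Fin d))
    (a b : ℝ) (ha : 0 < a) (hb : 0 < b)
    (u : ℝ → ℝ) (uLip uInf : ℝ)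
    (huLip : ∀ s t, |u s - u t| ≤ uLip * |s - t|)
    (huInf : ∀ s, |u s| ≤ uInf)
    (βv βx : ℝ)
    (hβv : ∀ i, ‖v i‖ ≤ βv) (hβx : ∀ i, ‖x i‖ ≤ βx)
    (xdot vdot : Fin N → EuclideanSpace ℝ (Fin d))
    (hxdot : ∀ i, xdot i = v i)
    (hvdot : ∀ i, vdot i = (a - b * ‖v i‖ ^ 2) • v i -
      (1 / (N : ℝ)) • ∑ j ∈ Finset.univ.erase i, u ‖x i - x j‖ • (x i - x j)) :
    ∀ i j, ‖xdot i - xdot j‖ + ‖vdot i - vdot j‖ ≤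
      (1 + a + 3 * b * βv ^ 2) * ‖v i - v j‖ +
      (uInf + 2 * βx * uLip) * ‖x i - x j‖ := by
  intro i j
  rcases eq_or_ne i j with rfl | hij
  · simp
  have hN2 : 2 ≤ N := by
    have : 1 < Fintype.card (Fin N) := Fintype.one_lt_card_iff_nontrivial.mpr ⟨⟨i, j, hij⟩⟩
    simp only [Fintype.card_fin] at this; omega
  have hN0 : 0 < (N : ℝ) := by positivity
  have hβx0 : 0 ≤ βx := le_trans (norm_nonneg (x i)) (hβx i)
  have hβv0 : 0 ≤ βv := le_trans (norm_nonneg (v i)) (hβv i)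
  have hLip0 : 0 ≤ uLip := by
    have h := huLip 0 1
    have h2 : |(0:ℝ) - 1| = 1 := by norm_num
    rw [h2, mul_one] at h
    exact le_trans (abs_nonneg _) h
  have hInf0 : 0 ≤ uInf := le_trans (abs_nonneg _) (huInf 0)
  set C : ℝ := uInf + 2 * βx * uLip with hC
  set D : ℝ := ‖x i - x j‖ with hD
  have hD0 : 0 ≤ D := norm_nonneg _
  set g : Fin N → Fin N → EuclideanSpace ℝ (Fin d) :=
    fun p q => u ‖x p - x q‖ • (x p - x q) with hg
  set T : Finset (Fin N) := (Finset.univ.erase i).erase j with hT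
  -- split sums
  have hji : j ∈ Finset.univ.erase i := Finset.mem_erase.mpr ⟨hij.symm, Finset.mem_univ j⟩
  have hij' : i ∈ Finset.univ.erase j := Finset.mem_erase.mpr ⟨hij, Finset.mem_univ i⟩
  have hSi : ∑ k ∈ Finset.univ.erase i, g i k = g i j + ∑ k ∈ T, g i k :=
    (Finset.add_sum_erase _ _ hji).symm
  have hSj : ∑ k ∈ Finset.univ.erase j, g j k = g j i + ∑ k ∈ T, g j k := by
    rw [← Finset.add_sum_erase _ (g j) hij']
    congr 1
    apply Finset.sum_congr _ (fun _ _ => rfl)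
    ext k
    simp [hT, and_comm, and_left_comm]
  -- pair term
  have hpair : g i j - g j i = (2 : ℝ) • g i j := by
    have h1 : g j i = -(g i j) := by
      simp only [hg]
      rw [norm_sub_rev (x j) (x i)]
      rw [show x j - x i = -(x i - x j) by abel, smul_neg]
    rw [h1]
    module
  have hpairn : ‖g i j - g j i‖ ≤ 2 * (uInf * D) := by
    rw [hpair, norm_smul, Real.norm_eq_abs]
    have : ‖g i j‖ ≤ uInf * D := by
      simp only [hg]
      rw [norm_smul, Real.norm_eq_abs]
      exact mul_le_mul_of_nonneg_right (huInf _) (norm_nonneg _)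
    calc |(2:ℝ)| * ‖g i j‖ = 2 * ‖g i j‖ := by norm_num
      _ ≤ 2 * (uInf * D) := by linarith
  -- sum over T
  have hTsum : ‖∑ k ∈ T, g i k - ∑ k ∈ T, g j k‖ ≤ (T.card : ℝ) * (C * D) := by
    rw [← Finset.sum_sub_distrib]
    refine le_trans (norm_sum_le _ _) ?_
    have := Finset.sum_le_card_nsmul T (fun k => ‖g i k - g j k‖) (C * D)
      (fun k _ => aux_int u uLip uInf βx huLip huInf hLip0 (x i) (x j) (x k) (hβx j) (hβx k))
    simpa [nsmul_eq_mul] using this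
  have hTcard : (T.card : ℝ) = (N : ℝ) - 2 := by
    have h1 : T.card = N - 2 := by
      rw [hT, Finset.card_erase_of_mem hji, Finset.card_erase_of_mem (Finset.mem_univ i)]
      simp only [Finset.card_univ, Fintype.card_fin]
      omega
    rw [h1]
    have : ((N - 2 : ℕ) : ℝ) = (N : ℝ) - 2 := by
      push_cast [Nat.cast_sub hN2]
      ring
    exact this
  -- total sum bound
  have hStot : ‖∑ k ∈ Finset.univ.erase i, g i k - ∑ k ∈ Finset.univ.erase j, g j k‖
      ≤ (N : ℝ) * (C * D) := by
    rw [hSi, hSj]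
    have heq : g i j + ∑ k ∈ T, g i k - (g j i + ∑ k ∈ T, g j k)
        = (g i j - g j i) + (∑ k ∈ T, g i k - ∑ k ∈ T, g j k) := by abel
    rw [heq]
    refine le_trans (norm_add_le _ _) ?_
    have h2 : (T.card : ℝ) * (C * D) = ((N : ℝ) - 2) * (C * D) := by rw [hTcard]
    rw [h2] at hTsum
    have huC : uInf * D ≤ C * D := by
      apply mul_le_mul_of_nonneg_right _ hD0
      rw [hC]; nlinarith
    have hN2' : (2 : ℝ) ≤ (N : ℝ) := by exact_mod_cast hN2
    have hCD0 : 0 ≤ C * D := by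
      apply mul_nonneg _ hD0
      rw [hC]; positivity
    nlinarith
  -- vdot decomposition
  have hvd : vdot i - vdot j =
      ((a - b * ‖v i‖ ^ 2) • v i - (a - b * ‖v j‖ ^ 2) • v j) -
      (1 / (N : ℝ)) • (∑ k ∈ Finset.univ.erase i, g i k - ∑ k ∈ Finset.univ.erase j, g j k) := by
    rw [hvdot i, hvdot j, smul_sub]
    simp only [hg]
    abel
  have hvdn : ‖vdot i - vdot j‖ ≤ (a + 3 * b * βv ^ 2) * ‖v i - v j‖ + C * D := by
    rw [hvd]
    refine le_trans (norm_sub_le _ _) ?_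
    have h1 := aux_prop a b βv ha.le hb.le (v i) (v j) (hβv i) (hβv j)
    have h2 : ‖(1 / (N : ℝ)) • (∑ k ∈ Finset.univ.erase i, g i k -
        ∑ k ∈ Finset.univ.erase j, g j k)‖ ≤ C * D := by
      rw [norm_smul, Real.norm_eq_abs, abs_of_nonneg (by positivity : (0:ℝ) ≤ 1 / (N:ℝ))]
      calc (1 / (N : ℝ)) * ‖∑ k ∈ Finset.univ.erase i, g i k -
            ∑ k ∈ Finset.univ.erase j, g j k‖
          ≤ (1 / (N : ℝ)) * ((N : ℝ) * (C * D)) :=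
            mul_le_mul_of_nonneg_left hStot (by positivity)
        _ = C * D := by field_simp
    linarith
  have hxd : ‖xdot i - xdot j‖ = ‖v i - v j‖ := by rw [hxdot i, hxdot j]
  rw [hxd]
  linarith

end
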